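/- arXiv:1809.09036 — 2 statements merged into one kernel-verified Lean document; each statement's English description precedes it below -/
import Mathlib

section
/- For every integer n ≥ 3, the Lucas–Coxeter–Catalan analogue for the Coxeter group D_n, namely Cat D_{n} = ({3n-2}/{n}) · {2(n-1):2 choose n-1:2}_L (which equals the product Π_{i=1}^{n} {h+d_i}/{d_i}, where the degrees of D_n are 2,4,…,2(n-1),n and h = 2(n-1)), is a polynomial in s and t all of whose coefficients are nonnegative integers. -/
open MvPolynomial Finset
set_option maxHeartbeats 1000000
set_option synthInstance.maxHeartbeats 400000

noncomputable section

/-- Polynomial ring ℤ[s,t] with s = X 0, t = X 1. -/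
abbrev P2 : Type := MvPolynomial (Fin 2) ℤ

def ps : P2 := X 0
def pt : P2 := X 1

/-- The Lucas sequence of polynomials: {0}=0, {1}=1, {n}=s{n-1}+t{n-2}. -/
def lucas : ℕ → P2
  | 0 => 0
  | 1 => 1
  | (n+2) => ps * lucas (n+1) + pt * lucas n

/-- The Lucastorial {n}! = {1}{2}⋯{n}. -/
def lucasFact (n : ℕ) : P2 := ∏ i ∈ Finset.range n, lucas (i+1)

/-- The d-divisible Lucastorial {n:d}! = {d}{2d}⋯{nd}. -/
def lucasFactD (d n : ℕ) : P2 := ∏ i ∈ Finset.range n, lucas (d*(i+1))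

/-- A polynomial lies in ℕ[s,t]: all coefficients are nonnegative. -/
def Nonneg (p : P2) : Prop := ∀ m, 0 ≤ p.coeff m

/-- The fraction field ℤ(s,t). -/
abbrev K : Type := FractionRing P2

def φ : P2 →+* K := algebraMap P2 K

def L (n : ℕ) : K := φ (lucas n)

def LFact (n : ℕ) : K := φ (lucasFact n)

def LFactD (d n : ℕ) : K := φ (lucasFactD d n)

/-- The Lucasnomial {n choose k}, as an element of the fraction field. -/
def lnom (n k : ℕ) : K := LFact n / (LFact k * LFact (n-k))

/-- The d-divisible Lucasnomial {n:d choose k:d}, as an element of the fraction field. -/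
def lnomD (d n k : ℕ) : K := LFactD d n / (LFactD d k * LFactD d (n-k))

/-- The Lucas-Catalan number C_{n} = (1/{n+1}) {2n choose n}. -/
def catL (n : ℕ) : K := lnom (2*n) n / L (n+1)

/-- The Lucas-Fuss-Catalan number C_{n,k} = (1/{kn+1}) {(k+1)n choose n}. -/
def fussCatL (n k : ℕ) : K := lnom ((k+1)*n) n / L (k*n+1)

lemma lucas_rec (n : ℕ) : lucas (n+2) = ps * lucas (n+1) + pt * lucas n := rfl

abbrev N2 : Type := MvPolynomial (Fin 2) ℕ
def ρ : N2 →+* P2 := MvPolynomial.map (Nat.castRingHom ℤ)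
def lucasN : ℕ → N2
  | 0 => 0
  | 1 => 1
  | (n+2) => X 0 * lucasN (n+1) + X 1 * lucasN n

lemma lucasN_rec (n : ℕ) : lucasN (n+2) = X 0 * lucasN (n+1) + X 1 * lucasN n := rfl

lemma rho_lucasN (n : ℕ) : ρ (lucasN n) = lucas n := by
  induction n using Nat.twoStepInduction with
  | zero => simp [lucasN, lucas, ρ]
  | one => simp [lucasN, lucas, ρ]
  | more n ih ih' =>
      rw [lucasN_rec, lucas_rec, map_add, map_mul, map_mul, ih, ih', ρ,
        MvPolynomial.map_X, MvPolynomial.map_X]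
      rfl

lemma nonneg_rho (q : N2) : Nonneg (ρ q) := by
  intro m
  rw [ρ, MvPolynomial.coeff_map]
  exact Int.ofNat_nonneg _

lemma lucas_add (a b : ℕ) :
    lucas (a + b + 1) = lucas (a+1) * lucas (b+1) + pt * lucas a * lucas b := by
  induction b using Nat.twoStepInduction generalizing a with
  | zero => simp [lucas]
  | one =>
      rw [show a + 1 + 1 = a + 2 from rfl, lucas_rec a,
        show (1:ℕ) + 1 = 0 + 2 from rfl, lucas_rec 0]
      simp [lucas]; ring
  | more b ih ih' =>
      rw [show a + (b+2) + 1 = (a + b + 1) + 2 from by omega, lucas_rec,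
        show a + b + 1 + 1 = a + (b+1) + 1 from by omega, ih', ih,
        show b + 2 + 1 = (b+1) + 2 from by omega, lucas_rec (b+1), lucas_rec b]
      ring

lemma lucas_rec' (n : ℕ) : lucas (n+3) = ps * lucas (n+2) + pt * lucas (n+1) := rfl

lemma eval_lucas_one (n : ℕ) :
    eval (fun i : Fin 2 => if i = 0 then 1 else 0) (lucas (n+1)) = 1 := by
  induction n using Nat.twoStepInduction with
  | zero => simp [lucas]
  | one =>
      rw [show (1:ℕ)+1 = 0+2 from rfl, lucas_rec]
      simp [lucas, ps, pt]
  | more n ih ih' =>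
      rw [lucas_rec']
      simp only [map_add, map_mul, ih, ih', ps, pt, eval_X]
      norm_num

lemma lucas_ne_zero (n : ℕ) : lucas (n+1) ≠ 0 := by
  intro h
  simpa [h] using eval_lucas_one n

lemma phi_eq_zero {p : P2} : φ p = 0 ↔ p = 0 := by
  rw [φ]; exact IsFractionRing.to_map_eq_zero_iff

lemma L_ne_zero (n : ℕ) : L (n+1) ≠ 0 := by
  rw [L, Ne, phi_eq_zero]; exact lucas_ne_zero n

lemma lucas_ne_zero' {n : ℕ} (h : 1 ≤ n) : lucas n ≠ 0 := by
  rw [← Nat.succ_pred_eq_of_pos h]; exact lucas_ne_zero _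

lemma L_ne_zero' {n : ℕ} (h : 1 ≤ n) : L n ≠ 0 := by
  rw [L, Ne, phi_eq_zero]; exact lucas_ne_zero' h

lemma lucasFactD_ne_zero {d : ℕ} (hd : 1 ≤ d) (n : ℕ) : lucasFactD d n ≠ 0 := by
  rw [lucasFactD]
  refine Finset.prod_ne_zero_iff.mpr fun i _ => ?_
  exact lucas_ne_zero' (Nat.one_le_iff_ne_zero.mpr (Nat.mul_ne_zero (by omega) (by omega)))

lemma LFactD_ne_zero {d : ℕ} (hd : 1 ≤ d) (n : ℕ) : LFactD d n ≠ 0 := by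
  rw [LFactD, Ne, phi_eq_zero]; exact lucasFactD_ne_zero hd n

lemma LFactD_zero (d : ℕ) : LFactD d 0 = 1 := by
  rw [LFactD, lucasFactD, Finset.prod_range_zero, map_one]

lemma LFactD_succ (d n : ℕ) : LFactD d (n+1) = LFactD d n * L (d*(n+1)) := by
  rw [LFactD, LFactD, lucasFactD, lucasFactD, Finset.prod_range_succ, map_mul, L]

lemma pascalD (e i j : ℕ) :
    lnomD (e+1) (i+j+2) (i+1)
      = L ((i+1)*(e+1)+1) * lnomD (e+1) (i+j+1) (i+1)
        + φ pt * L ((j+1)*e+j) * lnomD (e+1) (i+j+1) i := by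
  have key := lucas_add ((i+1)*(e+1)) ((j+1)*e+j)
  rw [show (i+1)*(e+1) + ((j+1)*e+j) + 1 = (e+1)*(i+j+2) from by ring,
      show (j+1)*e+j+1 = (j+1)*(e+1) from by ring] at key
  have keyK : L ((e+1)*(i+j+2))
      = L ((i+1)*(e+1)+1) * L ((j+1)*(e+1))
        + φ pt * L ((i+1)*(e+1)) * L ((j+1)*e+j) := by
    simp only [L, ← map_mul, ← map_add]
    exact congrArg φ key
  rw [lnomD, lnomD, lnomD, show i+j+2-(i+1) = j+1 from by omega,
      show i+j+1-(i+1) = j from by omega, show i+j+1-i = j+1 from by omega,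
      show i+j+2 = (i+j+1)+1 from rfl, LFactD_succ (e+1) (i+j+1),
      LFactD_succ (e+1) j, LFactD_succ (e+1) i,
      show (e+1)*(i+j+1+1) = (e+1)*(i+j+2) from by ring, keyK,
      show (e+1)*(i+1) = (i+1)*(e+1) from by ring,
      show (e+1)*(j+1) = (j+1)*(e+1) from by ring]
  have h1 : LFactD (e+1) i ≠ 0 := LFactD_ne_zero (by omega) i
  have h2 : LFactD (e+1) j ≠ 0 := LFactD_ne_zero (by omega) j
  have h3 : L ((i+1)*(e+1)) ≠ 0 := L_ne_zero' (Nat.mul_pos (by omega) (by omega))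
  have h4 : L ((j+1)*(e+1)) ≠ 0 := L_ne_zero' (Nat.mul_pos (by omega) (by omega))
  field_simp

lemma lnomD_zero {d : ℕ} (hd : 1 ≤ d) (n : ℕ) : lnomD d n 0 = 1 := by
  rw [lnomD, Nat.sub_zero, LFactD_zero, one_mul,
      div_self (LFactD_ne_zero hd n)]

lemma lnomD_self {d : ℕ} (hd : 1 ≤ d) (n : ℕ) : lnomD d n n = 1 := by
  rw [lnomD, Nat.sub_self, LFactD_zero, mul_one,
      div_self (LFactD_ne_zero hd n)]

lemma rho_X1 : ρ (X 1) = pt := by simp [ρ, pt]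

lemma lnomD_rep (e : ℕ) : ∀ n k : ℕ, k ≤ n → ∃ q : N2, lnomD (e+1) n k = φ (ρ q) := by
  intro n
  induction n with
  | zero =>
      intro k hk
      interval_cases k
      exact ⟨1, by rw [lnomD_zero (by omega), map_one, map_one]⟩
  | succ n ih =>
      intro k hk
      rcases Nat.eq_zero_or_pos k with rfl | hk1
      · exact ⟨1, by rw [lnomD_zero (by omega), map_one, map_one]⟩
      rcases eq_or_lt_of_le hk with rfl | hk2
      · exact ⟨1, by rw [lnomD_self (by omega), map_one, map_one]⟩
      obtain ⟨i, rfl⟩ : ∃ i, k = i + 1 := ⟨k - 1, by omega⟩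
      obtain ⟨j, rfl⟩ : ∃ j, n = i + j + 1 := ⟨n - i - 1, by omega⟩
      obtain ⟨q1, hq1⟩ := ih (i+1) (by omega)
      obtain ⟨q2, hq2⟩ := ih i (by omega)
      refine ⟨lucasN ((i+1)*(e+1)+1) * q1 + X 1 * lucasN ((j+1)*e+j) * q2, ?_⟩
      rw [show i+j+1+1 = i+j+2 from rfl, pascalD, hq1, hq2]
      simp only [map_add, map_mul, rho_lucasN, rho_X1]
      rw [L, L]

lemma keyD (m : ℕ) :
    L (3*m+7) / L (m+3) * lnomD 2 (2*m+4) (m+2)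
      = L (m+4) * (L (m+4) + φ pt * L (m+2)) * lnomD 2 (2*m+4) (m+1)
        + φ pt * L (2*m+3) * lnomD 2 (2*m+4) (m+2) := by
  have k1 := lucas_add (2*m+3) (m+3)
  rw [show 2*m+3+(m+3)+1 = 3*m+7 from by omega, show 2*m+3+1 = 2*m+4 from by omega,
      show m+3+1 = m+4 from by omega] at k1
  have k1K : L (3*m+7) = L (2*m+4) * L (m+4) + φ pt * L (2*m+3) * L (m+3) := by
    simp only [L, ← map_mul, ← map_add]; exact congrArg φ k1
  have k2 := lucas_add (m+2) (m+3)
  rw [show m+2+(m+3)+1 = 2*m+6 from by omega, show m+2+1 = m+3 from by omega,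
      show m+3+1 = m+4 from by omega] at k2
  have k2K : L (2*m+6) = L (m+3) * L (m+4) + φ pt * L (m+2) * L (m+3) := by
    simp only [L, ← map_mul, ← map_add]; exact congrArg φ k2
  have f2 : LFactD 2 (m+2) = LFactD 2 (m+1) * L (2*m+4) := by
    rw [show m+2 = (m+1)+1 from rfl, LFactD_succ, show 2*((m+1)+1) = 2*m+4 from by ring]
  have f3 : LFactD 2 (m+3) = LFactD 2 (m+1) * L (2*m+4) * L (2*m+6) := by
    rw [show m+3 = (m+2)+1 from rfl, LFactD_succ, show 2*((m+2)+1) = 2*m+6 from by ring, f2]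
  have h1 : LFactD 2 (m+1) ≠ 0 := LFactD_ne_zero (by omega) _
  have h2 : L (2*m+4) ≠ 0 := L_ne_zero' (by omega)
  have h3 : L (2*m+6) ≠ 0 := L_ne_zero' (by omega)
  have h4 : L (m+3) ≠ 0 := L_ne_zero' (by omega)
  rw [lnomD, lnomD, show 2*m+4-(m+2) = m+2 from by omega,
      show 2*m+4-(m+1) = m+3 from by omega, f2, f3]
  field_simp
  rw [k1K, k2K]
  ring


/-- for n ≥ 3, the Lucas–Coxeter–Catalan analogue of D_n,
Cat D_{n} = ({3n-2}/{n}) {2(n-1):2 choose n-1:2}, lies in ℕ[s,t]. -/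
theorem coxeterCatalan_D (n : ℕ) (hn : 3 ≤ n) :
    ∃ p : P2, Nonneg p ∧
      L (3*n-2) / L n * lnomD 2 (2*(n-1)) (n-1) = φ p := by
  obtain ⟨m, rfl⟩ : ∃ m, n = m + 3 := ⟨n - 3, by omega⟩
  rw [show 3*(m+3)-2 = 3*m+7 from by omega, show (m+3)-1 = m+2 from by omega,
      show 2*(m+2) = 2*m+4 from by ring]
  obtain ⟨q1, hq1⟩ := lnomD_rep 1 (2*m+4) (m+1) (by omega)
  obtain ⟨q2, hq2⟩ := lnomD_rep 1 (2*m+4) (m+2) (by omega)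
  rw [show (1:ℕ)+1 = 2 from rfl] at hq1 hq2
  refine ⟨ρ (lucasN (m+4) * (lucasN (m+4) + X 1 * lucasN (m+2)) * q1
      + X 1 * lucasN (2*m+3) * q2), nonneg_rho _, ?_⟩
  rw [keyD, hq1, hq2]
  simp only [map_add, map_mul, rho_lucasN, rho_X1, L]
end
end

section
/- For every integer m ≥ 2, the product {2}·{m} divides {m+2}·{2m} in Z[s,t], and the quotient {m+2}{2m}/({2}{m}) — the Lucas–Coxeter–Catalan analogue for the dihedral Coxeter group I_2(m) — is a polynomial in s and t all of whose coefficients are nonnegative integers. -/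
open MvPolynomial Finset

noncomputable section

lemma nonneg_add {p q : P2} (hp : Nonneg p) (hq : Nonneg q) : Nonneg (p + q) := by
  intro m; rw [coeff_add]; exact add_nonneg (hp m) (hq m)

lemma nonneg_mul {p q : P2} (hp : Nonneg p) (hq : Nonneg q) : Nonneg (p * q) := by
  intro m; rw [coeff_mul]
  exact Finset.sum_nonneg fun x _ => mul_nonneg (hp _) (hq _)

lemma nonneg_zero : Nonneg (0 : P2) := fun m => le_of_eq (coeff_zero m).symm

lemma nonneg_one : Nonneg (1 : P2) := by
  intro m; rw [coeff_one]; split <;> norm_num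

lemma nonneg_X (i : Fin 2) : Nonneg (X i : P2) := by
  intro m; rw [coeff_X']; split <;> norm_num

lemma nonneg_ps : Nonneg ps := nonneg_X 0
lemma nonneg_pt : Nonneg pt := nonneg_X 1

lemma lucas_nonneg : ∀ n, Nonneg (lucas n)
  | 0 => nonneg_zero
  | 1 => nonneg_one
  | (n+2) => nonneg_add (nonneg_mul nonneg_ps (lucas_nonneg (n+1)))
      (nonneg_mul nonneg_pt (lucas_nonneg n))

lemma lucas_addf : ∀ b a : ℕ,
    lucas (a + b + 1) = lucas (a+1) * lucas (b+1) + pt * lucas a * lucas b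
  | 0, a => by simp [lucas]
  | (b+1), a => by
    have h := lucas_addf b (a+1)
    have e : a + (b+1) + 1 = (a+1) + b + 1 := by ring
    rw [e, h, lucas_rec b, lucas_rec a]
    ring

def Ev : ℕ → P2
  | 0 => 0
  | (n+1) => lucas (2*n+1) + pt * Ev n

lemma Ev_nonneg : ∀ n, Nonneg (Ev n)
  | 0 => nonneg_zero
  | (n+1) => nonneg_add (lucas_nonneg _) (nonneg_mul nonneg_pt (Ev_nonneg n))

lemma lucas_two_mul : ∀ n, lucas (2*n) = ps * Ev n
  | 0 => by simp [lucas, Ev]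
  | (n+1) => by
    have h := lucas_two_mul n
    have e : 2*(n+1) = 2*n + 2 := by ring
    rw [e, lucas_rec, show 2*n+1 = 2*n+1 from rfl, h, Ev]
    ring

lemma lucas_two : lucas 2 = ps := by
  rw [show (2:ℕ) = 0+2 from rfl, lucas_rec]
  simp [lucas]

/-- for m ≥ 2, {2}{m} divides {m+2}{2m} with quotient
(Cat I_2(m)) in ℕ[s,t]. -/
theorem coxeterCatalan_I2 (m : ℕ) (hm : 2 ≤ m) :
    ∃ p : P2, Nonneg p ∧ lucas (m+2) * lucas (2*m) = p * (lucas 2 * lucas m) := by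
  rcases Nat.even_or_odd m with he | ho
  · -- m even, m = 2*(i+1)
    obtain ⟨j, hj⟩ := he
    have hj1 : 1 ≤ j := by omega
    obtain ⟨i, rfl⟩ : ∃ i, j = i + 1 := ⟨j - 1, by omega⟩
    have hm' : m = 2*i + 2 := by omega
    subst hm'
    refine ⟨Ev (i+2) * (lucas (2*i+3) + pt * lucas (2*i+1)), ?_, ?_⟩
    · exact nonneg_mul (Ev_nonneg _)
        (nonneg_add (lucas_nonneg _) (nonneg_mul nonneg_pt (lucas_nonneg _)))
    · have h1 : 2*(2*i+2) = (2*i+2) + (2*i+1) + 1 := by ring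
      have h2 : lucas ((2*i+2) + (2*i+1) + 1)
          = lucas (2*i+3) * lucas (2*i+2) + pt * lucas (2*i+2) * lucas (2*i+1) := by
        have := lucas_addf (2*i+1) (2*i+2)
        convert this using 3 <;> omega
      have h3 : lucas (2*i+2+2) = ps * Ev (i+2) := by
        have := lucas_two_mul (i+2)
        rw [show 2*(i+2) = 2*i+2+2 by ring] at this
        exact this
      rw [h1, h2, h3, lucas_two]
      ring
  · -- m odd, m = 2*j+1
    obtain ⟨j, rfl⟩ := ho
    refine ⟨lucas (2*j+1+2) * (Ev (j+1) + pt * Ev j), ?_, ?_⟩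
    · exact nonneg_mul (lucas_nonneg _)
        (nonneg_add (Ev_nonneg _) (nonneg_mul nonneg_pt (Ev_nonneg _)))
    · have h1 : 2*(2*j+1) = (2*j+1) + (2*j) + 1 := by ring
      have h2 : lucas ((2*j+1) + (2*j) + 1)
          = lucas (2*j+2) * lucas (2*j+1) + pt * lucas (2*j+1) * lucas (2*j) := by
        have := lucas_addf (2*j) (2*j+1)
        convert this using 3 <;> omega
      have h3 : lucas (2*j+2) = ps * Ev (j+1) := by
        have := lucas_two_mul (j+1)
        rw [show 2*(j+1) = 2*j+2 by ring] at this
        exact this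
      have h4 := lucas_two_mul j
      rw [h1, h2, h3, h4, lucas_two]
      ring
end
end
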